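/- For every quadruple 𝔉 ∈ A⁴ the Cartan supercharges square and anticommute into thermal-bracket gauge transformations along the projected super field strengths: (i) 𝒟_θ̄(𝒟_θ̄(𝔉)) = (𝓕_θ̄θ̄, 𝔉)_β; (ii) 𝒟_θ(𝒟_θ(𝔉)) = (𝓕_θθ, 𝔉)_β; (iii) 𝒟_θ(𝒟_θ̄(𝔉)) + 𝒟_θ̄(𝒟_θ(𝔉)) = (𝓕_θθ̄, 𝔉)_β. This is the component realization, in Wess–Zumino gauge, of the thermal equivariance (Cartan-model) algebra 𝒟_θ̄² = ℒ_{𝓕_θ̄θ̄}, 𝒟_θ² = ℒ_{𝓕_θθ}, {𝒟_θ, 𝒟_θ̄} = ℒ_{𝓕_θθ̄}. -/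

import Mathlib

section Cartan

variable {A : Type*} [CommRing A]

/-- The U(1)_T thermal bracket `(x,y)_β := x*(D y) − y*(D x)`. -/
def tb (D : A → A) (x y : A) : A :=
  x * D y - y * D x

/-- The quadruple thermal bracket of two supermultiplets `𝔛 = (X, X_ψ, X_ψ̄, X̃)` and
`𝔉 = (F, F_ψ, F_ψ̄, F̃)`:
`(𝔛,𝔉)_β := ((X,F)_β, (X,F_ψ)_β + (X_ψ,F)_β, (X,F_ψ̄)_β + (X_ψ̄,F)_β,
(X,F̃)_β + (X̃,F)_β + (X_ψ̄,F_ψ)_β − (X_ψ,F_ψ̄)_β)`. -/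
def qtb (D : A → A) (X F : A × A × A × A) : A × A × A × A :=
  (tb D X.1 F.1,
   tb D X.1 F.2.1 + tb D X.2.1 F.1,
   tb D X.1 F.2.2.1 + tb D X.2.2.1 F.1,
   tb D X.1 F.2.2.2 + tb D X.2.2.2 F.1 + tb D X.2.2.1 F.2.1 - tb D X.2.1 F.2.2.1)

/-- The Cartan supercharge `𝒟_θ̄` on a supermultiplet `𝔉 = (F, F_ψ, F_ψ̄, F̃)`, in
Wess–Zumino gauge with Vafa–Witten ghost quintet `(φ⁰, φ, φ̄, η, η̄)`:
`𝒟_θ̄ 𝔉 = (F_ψ, (φ,F)_β, F̃, (φ,F_ψ̄)_β − (η,F)_β)`. -/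
def cartanDthetaBar (D : A → A) (φ η : A) (F : A × A × A × A) : A × A × A × A :=
  (F.2.1, tb D φ F.1, F.2.2.2, tb D φ F.2.2.1 - tb D η F.1)

/-- The Cartan supercharge `𝒟_θ`:
`𝒟_θ 𝔉 = (F_ψ̄, (φ⁰,F)_β − F̃, (φ̄,F)_β, (φ⁰,F_ψ̄)_β − (φ̄,F_ψ)_β + (η̄,F)_β)`. -/
def cartanDtheta (D : A → A) (φ0 φbar ηbar : A) (F : A × A × A × A) : A × A × A × A :=
  (F.2.2.1, tb D φ0 F.1 - F.2.2.2, tb D φbar F.1,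
   tb D φ0 F.2.2.1 - tb D φbar F.2.1 + tb D ηbar F.1)

/-- **The thermal equivariance (Cartan-model) algebra in components (Appendix B/E):**
`𝒟_θ̄² = ℒ_{𝓕_θ̄θ̄}`, `𝒟_θ² = ℒ_{𝓕_θθ}`, `{𝒟_θ, 𝒟_θ̄} = ℒ_{𝓕_θθ̄}`.
Let `A` be a commutative ring, `D : A → A` a derivation, and `φ⁰, φ, φ̄, η, η̄ ∈ A` the
Vafa–Witten ghost quintet.  Then for every quadruple `𝔉 ∈ A⁴`:
(i) `𝒟_θ̄(𝒟_θ̄ 𝔉) = (𝓕_θ̄θ̄, 𝔉)_β` with `𝓕_θ̄θ̄ = (φ, 0, −η, 0)`;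
(ii) `𝒟_θ(𝒟_θ 𝔉) = (𝓕_θθ, 𝔉)_β` with `𝓕_θθ = (φ̄, −η̄, 0, (φ⁰,φ̄)_β)`;
(iii) `𝒟_θ(𝒟_θ̄ 𝔉) + 𝒟_θ̄(𝒟_θ 𝔉) = (𝓕_θθ̄, 𝔉)_β` with `𝓕_θθ̄ = (φ⁰, η, η̄, (φ,φ̄)_β)`. -/
theorem cartan_squares_to_field_strengths (D : A → A)
    (hadd : ∀ a b : A, D (a + b) = D a + D b)
    (hleib : ∀ a b : A, D (a * b) = D a * b + a * D b)
    (φ0 φ φbar η ηbar : A) :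
    ∀ F : A × A × A × A,
      (cartanDthetaBar D φ η (cartanDthetaBar D φ η F) = qtb D (φ, 0, -η, 0) F) ∧
      (cartanDtheta D φ0 φbar ηbar (cartanDtheta D φ0 φbar ηbar F)
        = qtb D (φbar, -ηbar, 0, tb D φ0 φbar) F) ∧
      (cartanDtheta D φ0 φbar ηbar (cartanDthetaBar D φ η F)
          + cartanDthetaBar D φ η (cartanDtheta D φ0 φbar ηbar F)
        = qtb D (φ0, η, ηbar, tb D φ φbar) F) := by
  have hsub : ∀ a b : A, D (a - b) = D a - D b := by
    intro a b
    have := hadd (a - b) b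
    simp at this
    linear_combination -this
  have h0 : D 0 = 0 := by simpa using hadd 0 0
  have hneg : ∀ a : A, D (-a) = -D a := by
    intro a; have := hadd a (-a); simp [h0] at this; linear_combination -this
  intro F
  obtain ⟨f, fp, fpb, ft⟩ := F
  refine ⟨?_, ?_, ?_⟩ <;>
    simp only [cartanDthetaBar, cartanDtheta, qtb, tb, Prod.mk_add_mk, Prod.mk.injEq,
      hsub, hadd, hleib, h0, hneg, true_and] <;>
    and_intros <;> ring

end Cartan
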